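/- Let L be a number field that is Galois over ℚ with Galois group Gal(L/ℚ) isomorphic to the quaternion group Q₈ of order 8, and suppose the discriminant of L is odd. Let H be a subgroup of Gal(L/ℚ) of order 2 and let K be the fixed field of H. Then K is totally real, and there exist squarefree integers d₁, d₂ > 1 with d₁ ≠ d₂, d₁ ≡ 1 (mod 4) and d₂ ≡ 1 (mod 4), such that K = ℚ(√d₁, √d₂), i.e., K is generated over ℚ by elements x, y with x² = d₁ and y² = d₂. -/

import Mathlib

open NumberField Module IntermediateField Polynomial

open QuaternionGroup in
private lemma quat_sq_eq : ∀ g : QuaternionGroup 2, g ^ 2 = 1 → g = 1 ∨ g = a 2 := by decide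

open QuaternionGroup in
private def S1 : Subgroup (QuaternionGroup 2) where
  carrier := {g | g ∈ ({a 0, a 1, a 2, a 3} : Finset (QuaternionGroup 2))}
  mul_mem' := by intro a b ha hb; revert a b; decide
  one_mem' := by decide
  inv_mem' := by intro a ha; revert a; decide

open QuaternionGroup in
private def S2 : Subgroup (QuaternionGroup 2) where
  carrier := {g | g ∈ ({a 0, a 2, xa 0, xa 2} : Finset (QuaternionGroup 2))}
  mul_mem' := by intro a b ha hb; revert a b; decide
  one_mem' := by decide
  inv_mem' := by intro a ha; revert a; decide

private instance : DecidablePred (· ∈ S1) := fun g =>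
  decidable_of_iff (g ∈ ({.a 0, .a 1, .a 2, .a 3} : Finset (QuaternionGroup 2))) Iff.rfl

private instance : DecidablePred (· ∈ S2) := fun g =>
  decidable_of_iff (g ∈ ({.a 0, .a 2, .xa 0, .xa 2} : Finset (QuaternionGroup 2))) Iff.rfl

private lemma card_S1 : Nat.card S1 = 4 := by rw [Nat.card_eq_fintype_card]; decide
private lemma card_S2 : Nat.card S2 = 4 := by rw [Nat.card_eq_fintype_card]; decide
private lemma S1_ne_S2 : S1 ≠ S2 := by
  intro h
  have h2 : QuaternionGroup.xa 0 ∈ S2 := by decide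
  rw [← h] at h2
  exact absurd h2 (by decide)
private lemma a2_mem_S1 : QuaternionGroup.a 2 ∈ S1 := by decide
private lemma a2_mem_S2 : QuaternionGroup.a 2 ∈ S2 := by decide
private lemma inf_S1_S2 : ∀ g : QuaternionGroup 2, g ∈ S1 ⊓ S2 ↔ (g = 1 ∨ g = .a 2) := by
  intro g
  rw [Subgroup.mem_inf]
  revert g; decide

open QuaternionGroup in
private def S0 : Subgroup (QuaternionGroup 2) where
  carrier := {g | g ∈ ({a 0, a 2} : Finset (QuaternionGroup 2))}
  mul_mem' := by intro a b ha hb; revert a b; decide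
  one_mem' := by decide
  inv_mem' := by intro a ha; revert a; decide

private instance : DecidablePred (· ∈ S0) := fun g =>
  decidable_of_iff (g ∈ ({.a 0, .a 2} : Finset (QuaternionGroup 2))) Iff.rfl

private lemma card_S1_inf_S2 : Nat.card (S1 ⊓ S2 : Subgroup (QuaternionGroup 2)) = 2 := by
  have h : (S1 ⊓ S2 : Subgroup (QuaternionGroup 2)) = S0 := by
    ext g
    rw [Subgroup.mem_inf]
    revert g; decide
  rw [h, Nat.card_eq_fintype_card]
  decide



private lemma trace_even {L : Type} [Field L] [NumberField L]
    {ι : Type*} [Fintype ι] [DecidableEq ι] (b : Basis ι ℤ (𝓞 L)) (u : 𝓞 L)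
    (hu : ∃ w, u ^ 2 = 2 * w) : (2 : ℤ) ∣ Algebra.trace ℤ (𝓞 L) u := by
  obtain ⟨w, hw⟩ := hu
  have htr : Algebra.trace ℤ (𝓞 L) u = Matrix.trace (Algebra.leftMulMatrix b u) :=
    Algebra.trace_eq_matrix_trace b u
  set f := Int.castRingHom (ZMod 2) with hf
  set M : Matrix ι ι ℤ := Algebra.leftMulMatrix b u with hM
  have hsq : M * M = Algebra.leftMulMatrix b w + Algebra.leftMulMatrix b w := by
    rw [hM, ← map_mul, ← pow_two, hw, two_mul, map_add]
  have hnil : IsNilpotent (M.map f) := by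
    refine ⟨2, ?_⟩
    rw [pow_two, ← Matrix.map_mul, hsq]
    ext i j
    simp only [Matrix.map_apply, Matrix.add_apply, Matrix.zero_apply, map_add]
    exact CharTwo.add_self_eq_zero _
  have h0 : Matrix.trace (M.map f) = 0 := by
    have := Matrix.isNilpotent_trace_of_isNilpotent hnil
    rwa [isNilpotent_iff_eq_zero] at this
  have hmap : Matrix.trace (M.map f) = ((Matrix.trace M : ℤ) : ZMod 2) := by
    simp [Matrix.trace, Matrix.map_apply, hf]
  rw [hmap] at h0
  rw [htr]
  exact_mod_cast (ZMod.intCast_zmod_eq_zero_iff_dvd _ 2).mp h0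

private lemma half_lemma {L : Type} [Field L] [NumberField L]
    (hdisc : Odd (NumberField.discr L)) (z : 𝓞 L) (hz : ∃ w, z ^ 2 = 2 * w) :
    ∃ w, z = 2 * w := by
  classical
  obtain ⟨w, hw⟩ := hz
  set f := Int.castRingHom (ZMod 2) with hf
  let b := RingOfIntegers.basis L
  let ι := Free.ChooseBasisIndex ℤ (𝓞 L)
  let T : Matrix ι ι ℤ := Algebra.traceMatrix ℤ b
  have hdet : T.det = NumberField.discr L := rfl
  have key : ∀ j : ι, (2:ℤ) ∣ Algebra.trace ℤ (𝓞 L) (z * b j) := by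
    intro j
    refine trace_even b _ ⟨w * (b j)^2, ?_⟩
    rw [mul_pow, hw]; ring
  set c : ι → ZMod 2 := fun i => ((b.repr z i : ℤ) : ZMod 2) with hc
  have hvec : Matrix.vecMul c (T.map f) = 0 := by
    funext j
    have h1 : Algebra.trace ℤ (𝓞 L) (z * b j)
        = ∑ i : ι, b.repr z i * Algebra.trace ℤ (𝓞 L) (b i * b j) := by
      conv_lhs => rw [← b.sum_repr z]
      rw [Finset.sum_mul, map_sum]
      congr 1; funext i
      rw [smul_mul_assoc, map_zsmul, smul_eq_mul]
    have h2 := key j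
    rw [h1] at h2
    have h3 : ((∑ i : ι, b.repr z i * Algebra.trace ℤ (𝓞 L) (b i * b j) : ℤ) : ZMod 2) = 0 := by
      rwa [ZMod.intCast_zmod_eq_zero_iff_dvd]
    push_cast at h3
    simp only [Matrix.vecMul, dotProduct, Pi.zero_apply, Matrix.map_apply, hc, hf,
      Int.coe_castRingHom, Algebra.traceMatrix_apply, Algebra.traceForm_apply, T]
    exact h3
  have hdet2 : IsUnit ((T.map f).det) := by
    have h4 : (T.map f).det = ((T.det : ℤ) : ZMod 2) := (RingHom.map_det f T).symm
    rw [h4, hdet]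
    obtain ⟨k, hk⟩ := hdisc
    rw [hk]
    push_cast
    rw [show ((2 : ZMod 2)) = 0 from rfl]
    simp
  have hc0 : c = 0 := by
    have h1 := congrArg (fun v => Matrix.vecMul v (T.map f)⁻¹) hvec
    simpa [Matrix.vecMul_vecMul, Matrix.mul_nonsing_inv _ hdet2, Matrix.zero_vecMul,
      Matrix.vecMul_one] using h1
  have hdvd : ∀ i : ι, (2:ℤ) ∣ b.repr z i := by
    intro i
    have : c i = 0 := by rw [hc0]; rfl
    rwa [hc, ZMod.intCast_zmod_eq_zero_iff_dvd] at this
  refine ⟨∑ i : ι, (b.repr z i / 2) • b i, ?_⟩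
  conv_lhs => rw [← b.sum_repr z]
  rw [Finset.mul_sum]
  congr 1; funext i
  have h5 : (2 : 𝓞 L) * ((b.repr z i / 2) • b i) = (2 * (b.repr z i / 2)) • b i := by
    rw [← smul_smul]
    norm_num
  rw [h5, Int.mul_ediv_cancel' (hdvd i)]


private lemma rat_of_int_sq {L : Type} [Field L] [NumberField L]
    (u : 𝓞 L) (q : ℚ) (h : (u : L) = algebraMap ℚ L q) : ∃ n : ℤ, (n : ℚ) = q := by
  have hint : IsIntegral ℤ (u : L) := u.2
  rw [h] at hint
  have : IsIntegral ℤ q := (isIntegral_algebraMap_iff (algebraMap ℚ L).injective).mp hint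
  obtain ⟨n, hn⟩ := IsIntegrallyClosed.isIntegral_iff.mp this
  exact ⟨n, hn⟩


private lemma dmod4 {L : Type} [Field L] [NumberField L]
    (hdisc : Odd (NumberField.discr L)) {d : ℤ} (hd : Squarefree d) {x : L}
    (hx : x ^ 2 = (d : L)) : d % 4 = 1 := by
  have hxint : IsIntegral ℤ x := by
    refine ⟨Polynomial.X ^ 2 - Polynomial.C d, ?_, ?_⟩
    · apply Polynomial.monic_X_pow_sub_C _ (by norm_num)
    · simp only [Polynomial.eval₂_sub, Polynomial.eval₂_pow, Polynomial.eval₂_X,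
        Polynomial.eval₂_C, hx]
      simp
  set z : 𝓞 L := ⟨x, hxint⟩ with hz
  have hzx : (z : L) = x := rfl
  have hzsq : z ^ 2 = (d : 𝓞 L) := by
    ext
    push_cast [hzx]
    exact hx
  have hnd4 : ¬ (4 ∣ d) := by
    intro hdvd
    have := hd 2 (by omega)
    rw [Int.isUnit_iff] at this
    omega
  -- d is odd
  have hodd : ¬ (2 ∣ d) := by
    intro h2
    obtain ⟨w, hw⟩ := half_lemma hdisc z ⟨((d / 2 : ℤ) : 𝓞 L), by
      rw [hzsq]
      have : (2 : 𝓞 L) * ((d / 2 : ℤ) : 𝓞 L) = ((2 * (d/2) : ℤ) : 𝓞 L) := by push_cast; ring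
      rw [this, Int.mul_ediv_cancel' h2]⟩
    -- x = 2 w
    have hx2 : x = 2 * (w : L) := by
      rw [← hzx, hw]
      push_cast [map_ofNat]
      ring
    have hwsq : ((w ^ 2 : 𝓞 L) : L) = algebraMap ℚ L ((d : ℚ) / 4) := by
      have h4 : ((d : L)) = 4 * (w:L)^2 := by rw [← hx, hx2]; ring
      have hL : ((w ^ 2 : 𝓞 L) : L) = ((w:L))^2 := by push_cast; rfl
      rw [hL, map_div₀, map_ofNat,
        show ((algebraMap ℚ L) (d:ℚ)) = (d:L) from map_intCast _ d, h4]
      field_simp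
    obtain ⟨n, hn⟩ := rat_of_int_sq _ _ hwsq
    have hnn : n * 4 = d := by
      have := congrArg (fun t : ℚ => t * 4) hn
      field_simp at this
      exact_mod_cast this
    exact hnd4 ⟨n, by omega⟩
  -- d ≢ 3 mod 4
  have hne3 : d % 4 ≠ 3 := by
    intro h3
    have h2d : 2 ∣ (d + 1) := by omega
    obtain ⟨w, hw⟩ := half_lemma hdisc (1 + z) ⟨z + (((d+1) / 2 : ℤ) : 𝓞 L), by
      have : (1 + z)^2 = 1 + 2*z + (d : 𝓞 L) := by rw [add_sq, hzsq]; ring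
      rw [this]
      have h5 : (2 : 𝓞 L) * (((d+1) / 2 : ℤ) : 𝓞 L) = (((d+1) : ℤ) : 𝓞 L) := by
        rw [show (2 : 𝓞 L) = ((2:ℤ) : 𝓞 L) by push_cast; rfl, ← Int.cast_mul,
          Int.mul_ediv_cancel' h2d]
      rw [mul_add, h5]
      push_cast
      ring⟩
    have hx2 : x = 2 * (w : L) - 1 := by
      have : ((1 + z : 𝓞 L) : L) = ((2 * w : 𝓞 L) : L) := by rw [hw]
      push_cast [hzx, map_ofNat] at this
      linear_combination this
    have hwsq : ((w ^ 2 - w : 𝓞 L) : L) = algebraMap ℚ L (((d : ℚ) - 1) / 4) := by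
      have h4 : ((d : L)) = 4 * (w:L)^2 - 4 * (w:L) + 1 := by rw [← hx, hx2]; ring
      have hL : ((w ^ 2 - w : 𝓞 L) : L) = ((w:L))^2 - (w:L) := by push_cast; rfl
      rw [hL, map_div₀, map_ofNat, map_sub, map_one,
        show ((algebraMap ℚ L) (d:ℚ)) = (d:L) from map_intCast _ d, h4]
      field_simp
      ring
    obtain ⟨n, hn⟩ := rat_of_int_sq _ _ hwsq
    have hnn : n * 4 = d - 1 := by
      have := congrArg (fun t : ℚ => t * 4) hn
      field_simp at this
      exact_mod_cast this
    omega
  omega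


private lemma int_sq_mul_squarefree (N : ℤ) (hN : 0 < N) :
    ∃ a b : ℤ, 0 < a ∧ b ≠ 0 ∧ b ^ 2 * a = N ∧ Squarefree a := by
  obtain ⟨a, b, hab, hsf⟩ := Nat.sq_mul_squarefree N.toNat
  have hNt : (N.toNat : ℤ) = N := Int.toNat_of_nonneg hN.le
  have ha0 : a ≠ 0 := by rintro rfl; simp at hab; omega
  have hb0 : b ≠ 0 := by rintro rfl; simp at hab; omega
  refine ⟨(a : ℤ), (b : ℤ), by positivity, by exact_mod_cast hb0, ?_, ?_⟩
  · rw [← hNt]; exact_mod_cast hab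
  · exact Int.squarefree_natCast.mpr hsf

private lemma quad_lemma {L : Type} [Field L] [NumberField L] (F : IntermediateField ℚ L)
    (hF : finrank ℚ F = 2)
    (hpos : ∀ t : L, t ∈ F → ∀ q : ℚ, t ^ 2 = algebraMap ℚ L q → 0 ≤ q) :
    ∃ (d : ℤ) (x : L), Squarefree d ∧ 1 < d ∧ x ^ 2 = (d : L) ∧ x ∈ F ∧
      IntermediateField.adjoin ℚ {x} = F := by
  have hFle : ¬ F ≤ (⊥ : IntermediateField ℚ L) := by
    intro hle
    have : F = ⊥ := le_bot_iff.mp hle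
    rw [this, IntermediateField.finrank_bot] at hF
    omega
  obtain ⟨α, hαF, hαB⟩ := SetLike.not_le_iff_exists.mp hFle
  -- α has a degree-2 minimal polynomial
  have hαint : IsIntegral ℚ α := IsIntegral.of_finite ℚ α
  have hdeg : (minpoly ℚ α).natDegree = 2 := by
    set β : F := ⟨α, hαF⟩ with hβ
    have hbeq : minpoly ℚ α = minpoly ℚ β := by
      have : α = algebraMap F L β := rfl
      rw [this, minpoly.algebraMap_eq (algebraMap F L).injective]
    have hdvd : (minpoly ℚ β).natDegree ∣ 2 := by
      rw [← hF]; exact minpoly.degree_dvd (IsIntegral.of_finite ℚ β)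
    rw [hbeq]
    rcases (Nat.dvd_prime Nat.prime_two).mp hdvd with h1 | h2
    · exfalso
      have : β ∈ (algebraMap ℚ F).range := minpoly.natDegree_eq_one_iff.mp h1
      obtain ⟨r, hr⟩ := this
      apply hαB
      rw [IntermediateField.mem_bot]
      exact ⟨r, congrArg Subtype.val hr⟩
    · exact h2
  -- complete the square
  set p := minpoly ℚ α with hp
  set b := p.coeff 1 with hbdef
  set c := p.coeff 0 with hcdef
  have haeval : α ^ 2 + algebraMap ℚ L b * α + algebraMap ℚ L c = 0 := by
    have h0 := minpoly.aeval ℚ α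
    rw [Polynomial.aeval_eq_sum_range, hdeg] at h0
    rw [Finset.sum_range_succ, Finset.sum_range_succ, Finset.sum_range_one] at h0
    have hc2 : p.coeff 2 = 1 := by
      have := (minpoly.monic hαint).coeff_natDegree
      rwa [hdeg] at this
    rw [← hp] at h0
    rw [hc2] at h0
    rw [Algebra.smul_def, Algebra.smul_def, Algebra.smul_def] at h0
    rw [map_one] at h0
    linear_combination h0
  set x₀ : L := 2 * α + algebraMap ℚ L b with hx₀
  set q : ℚ := b ^ 2 - 4 * c with hq
  have hx₀sq : x₀ ^ 2 = algebraMap ℚ L q := by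
    rw [hx₀, hq, map_sub, map_mul, map_pow, map_ofNat]
    linear_combination (4:L) * haeval
  have h2F : (2 : L) ∈ F := by
    have := F.algebraMap_mem (2 : ℚ)
    rwa [map_ofNat] at this
  have hx₀F : x₀ ∈ F := F.add_mem (F.mul_mem h2F hαF) (F.algebraMap_mem b)
  have hx₀B : x₀ ∉ (⊥ : IntermediateField ℚ L) := by
    intro hmem
    obtain ⟨r, hr⟩ := IntermediateField.mem_bot.mp hmem
    apply hαB
    rw [IntermediateField.mem_bot]
    refine ⟨(r - b) / 2, ?_⟩
    rw [map_div₀, map_sub, map_ofNat]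
    rw [hx₀] at hr
    linear_combination hr / 2
  have hq0 : q ≠ 0 := by
    intro hq00
    apply hx₀B
    have : x₀ ^ 2 = 0 := by rw [hx₀sq, hq00, map_zero]
    have hx00 : x₀ = 0 := by
      exact pow_eq_zero_iff (by norm_num) |>.mp this
    rw [hx00]
    exact zero_mem _
  have hqpos : 0 < q := lt_of_le_of_ne (hpos x₀ hx₀F q hx₀sq) (Ne.symm hq0)
  -- scale to a squarefree integer
  set N : ℤ := q.num * q.den with hN
  have hNpos : 0 < N := mul_pos (Rat.num_pos.mpr hqpos) (by exact_mod_cast q.pos)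
  obtain ⟨d, s, hdpos, hs0, hsd, hsf⟩ := int_sq_mul_squarefree N hNpos
  set x : L := algebraMap ℚ L ((q.den : ℚ) / (s : ℚ)) * x₀ with hxdef
  have hs0' : ((s:ℚ)) ≠ 0 := Int.cast_ne_zero.mpr hs0
  have hden0 : ((q.den:ℚ)) ≠ 0 := by exact_mod_cast q.den_nz
  have hxsq : x ^ 2 = (d : L) := by
    rw [hxdef, mul_pow, ← map_pow, hx₀sq, ← map_mul]
    rw [show ((d : L)) = algebraMap ℚ L ((d:ℚ)) from (map_intCast _ d).symm]
    congr 1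
    have hqd : ((q.den:ℚ))^2 * q = (N : ℚ) := by
      rw [hN]
      push_cast
      rw [show (q.den:ℚ)^2 * q = (q.den:ℚ) * (q * (q.den:ℚ)) by ring]
      rw [Rat.mul_den_eq_num]
      ring
    rw [div_pow, div_mul_eq_mul_div, hqd, ← hsd]
    push_cast
    field_simp
  have hxF : x ∈ F := F.mul_mem (F.algebraMap_mem _) hx₀F
  have hxB : x ∉ (⊥ : IntermediateField ℚ L) := by
    intro hmem
    apply hx₀B
    have hrat0 : ((q.den : ℚ) / (s:ℚ)) ≠ 0 := div_ne_zero hden0 hs0'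
    have : x₀ = algebraMap ℚ L ((q.den : ℚ) / (s : ℚ))⁻¹ * x := by
      rw [hxdef, ← mul_assoc, ← map_mul, inv_mul_cancel₀ hrat0, map_one, one_mul]
    rw [this]
    exact mul_mem (IntermediateField.algebraMap_mem _ _) hmem
  have hd1 : d ≠ 1 := by
    rintro rfl
    apply hxB
    have : x ^ 2 = 1 := by rw [hxsq]; norm_num
    have h2 : (x - 1) * (x + 1) = 0 := by linear_combination this
    rcases mul_eq_zero.mp h2 with h | h
    · have : x = 1 := by linear_combination h
      rw [this]; exact one_mem _
    · have : x = -1 := by linear_combination h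
      rw [this]; exact neg_mem (one_mem _)
  -- adjoin x = F
  have hxint : IsIntegral ℚ x := IsIntegral.of_finite ℚ x
  have hmdeg : (minpoly ℚ x).natDegree = 2 := by
    have hdvd : minpoly ℚ x ∣ (X ^ 2 - C ((d:ℚ))) := by
      apply minpoly.dvd
      rw [map_sub, map_pow, aeval_X, aeval_C, hxsq]
      rw [show ((algebraMap ℚ L) ((d:ℚ))) = (d:L) from map_intCast _ d]
      ring
    have hne : (X ^ 2 - C ((d:ℚ))) ≠ 0 :=
      Polynomial.X_pow_sub_C_ne_zero (by norm_num) _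
    have hle : (minpoly ℚ x).natDegree ≤ 2 := by
      have := Polynomial.natDegree_le_of_dvd hdvd hne
      rwa [Polynomial.natDegree_X_pow_sub_C] at this
    have hne1 : (minpoly ℚ x).natDegree ≠ 1 := by
      intro h1
      obtain ⟨r, hr⟩ := minpoly.natDegree_eq_one_iff.mp h1
      exact hxB (IntermediateField.mem_bot.mpr ⟨r, hr⟩)
    have hpos' : 0 < (minpoly ℚ x).natDegree := minpoly.natDegree_pos hxint
    omega
  have hfr : finrank ℚ (adjoin ℚ {x} : IntermediateField ℚ L) = 2 := by
    rw [IntermediateField.adjoin.finrank hxint, hmdeg]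
  have hle : adjoin ℚ {x} ≤ F := by
    rw [IntermediateField.adjoin_le_iff]
    rintro t ht
    rw [Set.mem_singleton_iff] at ht
    rw [ht]
    exact hxF
  have : adjoin ℚ {x} = F := IntermediateField.eq_of_le_of_finrank_eq hle (by rw [hfr, hF])
  have h1d : 1 < d := by omega
  exact ⟨d, x, hsf, h1d, hxsq, hxF, this⟩



section Main

variable (L : Type) [Field L] [NumberField L] [IsGalois ℚ L]

private lemma fixedField_antitone {H₁ H₂ : Subgroup (L ≃ₐ[ℚ] L)} (h : H₁ ≤ H₂) :
    IntermediateField.fixedField H₂ ≤ IntermediateField.fixedField H₁ :=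
  fun _x hx g => hx ⟨g.1, h g.2⟩

private lemma real_emb
    (e : (L ≃ₐ[ℚ] L) ≃* QuaternionGroup 2)
    (H : Subgroup (L ≃ₐ[ℚ] L)) (hH : Nat.card H = 2)
    (K : IntermediateField ℚ L) (hK : K = IntermediateField.fixedField H)
    {τ : L ≃ₐ[ℚ] L} (hτH : τ ∈ H) (hτe : e τ = QuaternionGroup.a 2) :
    ∀ φ : K →+* ℂ, ∀ v : K, (φ v).im = 0 := by
  intro φ v
  letI : Algebra K ℂ := φ.toAlgebra
  haveI : Algebra.IsAlgebraic K L := Algebra.IsAlgebraic.of_finite K L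
  haveI : NoZeroSMulDivisors K ℂ := inferInstance
  haveI : NoZeroSMulDivisors K L :=
    inferInstance
  let ψ : L →ₐ[K] ℂ := IsAlgClosed.lift
  letI : Algebra L ℂ := ψ.toRingHom.toAlgebra
  haveI : IsScalarTower ℚ L ℂ := IsScalarTower.of_algebraMap_eq (fun r => by
    have h1 : algebraMap ℚ L r = algebraMap K L (algebraMap ℚ K r) :=
      (IsScalarTower.algebraMap_apply ℚ K L r)
    have h2 : (algebraMap L ℂ) (algebraMap ℚ L r) = ψ (algebraMap ℚ L r) := rfl
    rw [h2, h1, ψ.commutes]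
    show algebraMap ℚ ℂ r = φ (algebraMap ℚ K r)
    rw [eq_ratCast (algebraMap ℚ K) r, map_ratCast, eq_ratCast])
  let conjA : ℂ →ₐ[ℚ] ℂ := ((starRingEnd ℂ) : ℂ →+* ℂ).toRatAlgHom
  let σ : L ≃ₐ[ℚ] L := conjA.restrictNormal' L
  have hσ : ∀ t : L, ψ (σ t) = (starRingEnd ℂ) (ψ t) := fun t =>
    AlgHom.restrictNormal_commutes conjA L t
  have hψv : ψ (algebraMap K L v) = φ v := ψ.commutes v
  have hfix : σ (algebraMap K L v) = algebraMap K L v := by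
    by_cases hσ1 : σ = 1
    · rw [hσ1]; rfl
    · have hσ2 : σ ^ 2 = 1 := by
        ext t
        have h1 := hσ (σ t)
        rw [hσ t, Complex.conj_conj] at h1
        have h2 : ψ ((σ * σ) t) = ψ t := by rwa [AlgEquiv.mul_apply]
        have h3 := ψ.toRingHom.injective h2
        rw [pow_two]
        simpa using h3
      have he2 : (e σ) ^ 2 = 1 := by rw [← map_pow, hσ2, map_one]
      rcases quat_sq_eq (e σ) he2 with h | h
      · exact absurd (e.injective (by rw [h, map_one])) hσ1
      · have hστ : σ = τ := e.injective (by rw [h, hτe])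
        have hmem : (algebraMap K L v) ∈ IntermediateField.fixedField H := by
          rw [← hK]; exact v.2
        have h4 := hmem ⟨τ, hτH⟩
        rw [hστ]
        exact h4
  have : (starRingEnd ℂ) (φ v) = φ v := by
    rw [← hψv, ← hσ, hfix]
  have h3 := Complex.conj_eq_iff_im.mp this
  exact h3

end Main



set_option maxHeartbeats 1000000

/-- Let `L` be a number field, Galois over `ℚ` with Galois group
isomorphic to the quaternion group `Q₈` of order 8 and with odd discriminant. Let `H`
be a subgroup of `Gal(L/ℚ)` of order 2 and `K` its fixed field. Then `K` is totally
real (every complex embedding of `K` takes values in `ℝ`), and there are squarefree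
integers `d₁, d₂ > 1` with `d₁ ≠ d₂`, `d₁ ≡ 1 (mod 4)`, `d₂ ≡ 1 (mod 4)` such that
`K = ℚ(√d₁, √d₂)`, i.e. `K` is generated over `ℚ` by elements `x`, `y` with `x² = d₁`
and `y² = d₂`. -/
theorem quaternion_field_quartic_subfield (L : Type) [Field L] [NumberField L]
    [IsGalois ℚ L]
    (e : (L ≃ₐ[ℚ] L) ≃* QuaternionGroup 2)
    (hdisc : Odd (NumberField.discr L))
    (H : Subgroup (L ≃ₐ[ℚ] L)) (hH : Nat.card H = 2)
    (K : IntermediateField ℚ L) (hK : K = IntermediateField.fixedField H) :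
    (∀ φ : K →+* ℂ, ∀ v : K, (φ v).im = 0) ∧
    ∃ d1 d2 : ℤ, Squarefree d1 ∧ Squarefree d2 ∧ 1 < d1 ∧ 1 < d2 ∧ d1 ≠ d2 ∧
      d1 % 4 = 1 ∧ d2 % 4 = 1 ∧
      ∃ x y : L, x ^ 2 = (d1 : L) ∧ y ^ 2 = (d2 : L) ∧
        K = IntermediateField.adjoin ℚ {x, y} := by
  classical
  -- find the element τ of order 2 in H
  have hHbot : H ≠ ⊥ := by
    intro h
    rw [h] at hH
    rw [Subgroup.card_eq_one.mpr rfl] at hH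
    omega
  obtain ⟨τ, hτH, hτ1⟩ := (Subgroup.bot_or_exists_ne_one H).resolve_left hHbot
  have hτ2 : τ ^ 2 = 1 := by
    have h1 : (⟨τ, hτH⟩ : H) ^ Nat.card H = 1 := pow_card_eq_one'
    rw [hH] at h1
    have := congrArg (Subtype.val) h1
    push_cast at this
    exact_mod_cast this
  have hτe : e τ = QuaternionGroup.a 2 := by
    rcases quat_sq_eq (e τ) (by rw [← map_pow, hτ2, map_one]) with h | h
    · exact absurd (e.injective (by rw [h, map_one])) hτ1
    · exact h
  -- H is generated by τ
  have hτord : orderOf τ = 2 := orderOf_eq_prime hτ2 hτ1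
  have hHz : Subgroup.zpowers τ = H := by
    apply Subgroup.eq_of_le_of_card_ge (Subgroup.zpowers_le.mpr hτH)
    rw [hH, Nat.card_zpowers, hτord]
  -- Part 1 : K is totally real
  have hreal : ∀ φ : K →+* ℂ, ∀ v : K, ((φ v).im = 0) := real_emb L e H hH K hK hτH hτe
  refine ⟨hreal, ?_⟩
  -- cardinalities
  have hcardG : Nat.card (L ≃ₐ[ℚ] L) = 8 := by
    rw [Nat.card_congr e.toEquiv]
    rw [Nat.card_eq_fintype_card]
    decide
  have hrankL : finrank ℚ L = 8 := by
    rw [← IsGalois.card_aut_eq_finrank]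
    exact hcardG
  -- the two order-4 subgroups
  set H1 : Subgroup (L ≃ₐ[ℚ] L) := S1.map e.symm.toMonoidHom with hH1
  set H2 : Subgroup (L ≃ₐ[ℚ] L) := S2.map e.symm.toMonoidHom with hH2
  have hcard1 : Nat.card H1 = 4 := by
    rw [← card_S1]
    exact (Nat.card_congr (MulEquiv.subgroupMap e.symm S1).toEquiv).symm
  have hcard2 : Nat.card H2 = 4 := by
    rw [← card_S2]
    exact (Nat.card_congr (MulEquiv.subgroupMap e.symm S2).toEquiv).symm
  have hτH1 : τ ∈ H1 := ⟨QuaternionGroup.a 2, a2_mem_S1, by rw [← hτe]; exact e.symm_apply_apply τ⟩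
  have hτH2 : τ ∈ H2 := ⟨QuaternionGroup.a 2, a2_mem_S2, by rw [← hτe]; exact e.symm_apply_apply τ⟩
  have hHle1 : H ≤ H1 := by rw [← hHz]; exact Subgroup.zpowers_le.mpr hτH1
  have hHle2 : H ≤ H2 := by rw [← hHz]; exact Subgroup.zpowers_le.mpr hτH2
  have hH1ne2 : H1 ≠ H2 := by
    intro h
    exact S1_ne_S2 (Subgroup.map_injective (e.symm.injective) h)
  -- the fixed fields
  set F1 : IntermediateField ℚ L := IntermediateField.fixedField H1 with hF1
  set F2 : IntermediateField ℚ L := IntermediateField.fixedField H2 with hF2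
  have hrk : ∀ (H' : Subgroup (L ≃ₐ[ℚ] L)), Nat.card H' = 4 →
      finrank ℚ (IntermediateField.fixedField H') = 2 := by
    intro H' h4
    have h5 : finrank (IntermediateField.fixedField H') L = 4 := by
      rw [IntermediateField.finrank_fixedField_eq_card, h4]
    have h6 := Module.finrank_mul_finrank ℚ (IntermediateField.fixedField H') L
    rw [h5, hrankL] at h6
    omega
  have hrkF1 : finrank ℚ F1 = 2 := hrk H1 hcard1
  have hrkF2 : finrank ℚ F2 = 2 := hrk H2 hcard2
  have hrkK : finrank ℚ K = 4 := by
    have h5 : finrank K L = 2 := by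
      rw [hK, IntermediateField.finrank_fixedField_eq_card, hH]
    have h6 := Module.finrank_mul_finrank ℚ K L
    rw [h5, hrankL] at h6
    omega
  have hF1K : F1 ≤ K := by rw [hK]; exact fixedField_antitone L hHle1
  have hF2K : F2 ≤ K := by rw [hK]; exact fixedField_antitone L hHle2
  have hF1ne2 : F1 ≠ F2 := by
    intro h
    apply hH1ne2
    rw [← IntermediateField.fixingSubgroup_fixedField H1,
      ← IntermediateField.fixingSubgroup_fixedField H2]
    exact congrArg _ h
  -- positivity of squares of elements of K
  have hpos : ∀ t : L, t ∈ K → ∀ q : ℚ, t ^ 2 = algebraMap ℚ L q → 0 ≤ q := by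
    intro t htK q hq
    haveI : Algebra.IsAlgebraic ℚ K := Algebra.IsAlgebraic.of_finite ℚ K
    let φ : K →+* ℂ := (IsAlgClosed.lift (R := ℚ) (S := K) (M := ℂ)).toRingHom
    set vK : K := ⟨t, htK⟩ with hvK
    have h1 : vK ^ 2 = algebraMap ℚ K q := by
      ext
      push_cast [hvK]
      exact hq
    have h2 : (φ vK) ^ 2 = (q : ℂ) := by
      rw [← map_pow, h1, eq_ratCast (algebraMap ℚ K) q, map_ratCast]
    have h3 : (φ vK).im = 0 := hreal φ vK
    have h6 : (0:ℝ) ≤ (q:ℝ) := by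
      have h9 := congrArg Complex.re h2
      rw [pow_two, Complex.mul_re, h3] at h9
      simp only [mul_zero, sub_zero, Complex.ratCast_re] at h9
      rw [← h9]
      exact mul_self_nonneg _
    exact_mod_cast h6
  have hposF : ∀ (F : IntermediateField ℚ L), F ≤ K →
      ∀ t : L, t ∈ F → ∀ q : ℚ, t ^ 2 = algebraMap ℚ L q → 0 ≤ q :=
    fun F hle t ht q hq => hpos t (hle ht) q hq
  -- quadratic generators
  obtain ⟨d1, x, hsf1, hd1, hx1, hxF1, hadj1⟩ := quad_lemma F1 hrkF1 (hposF F1 hF1K)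
  obtain ⟨d2, y, hsf2, hd2, hy2, hyF2, hadj2⟩ := quad_lemma F2 hrkF2 (hposF F2 hF2K)
  have hm1 : d1 % 4 = 1 := dmod4 hdisc hsf1 hx1
  have hm2 : d2 % 4 = 1 := dmod4 hdisc hsf2 hy2
  -- d1 ≠ d2
  have hdne : d1 ≠ d2 := by
    intro hdd
    apply hF1ne2
    have hyx : y ∈ F1 := by
      have hsq : y ^ 2 = x ^ 2 := by rw [hx1, hy2, hdd]
      have h7 : (y - x) * (y + x) = 0 := by linear_combination hsq
      rcases mul_eq_zero.mp h7 with h | h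
      · have : y = x := by linear_combination h
        rw [this]; exact hxF1
      · have : y = -x := by linear_combination h
        rw [this]; exact F1.neg_mem hxF1
    have hle : F2 ≤ F1 := by
      rw [← hadj2]
      rw [IntermediateField.adjoin_le_iff]
      rintro t ht
      rw [Set.mem_singleton_iff] at ht
      rw [ht]; exact hyx
    exact (IntermediateField.eq_of_le_of_finrank_eq hle (by rw [hrkF2, hrkF1])).symm
  -- H = H1 ⊓ H2
  have hinf_card : Nat.card (H1 ⊓ H2 : Subgroup (L ≃ₐ[ℚ] L)) = 2 := by
    have hmap : H1 ⊓ H2 = (S1 ⊓ S2).map e.symm.toMonoidHom := by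
      rw [hH1, hH2, Subgroup.map_inf _ _ _ e.symm.injective]
    rw [hmap]
    exact (Nat.card_congr (MulEquiv.subgroupMap e.symm (S1 ⊓ S2)).toEquiv).symm.trans
      card_S1_inf_S2
  have hHinf : H = H1 ⊓ H2 := by
    apply Subgroup.eq_of_le_of_card_ge (le_inf hHle1 hHle2)
    rw [hH, hinf_card]
  -- K = F1 ⊔ F2
  have hsupK : F1 ⊔ F2 ≤ K := by
    rw [hK, hHinf]
    exact sup_le (fixedField_antitone L inf_le_left) (fixedField_antitone L inf_le_right)
  have hfixsup : IntermediateField.fixingSubgroup (F1 ⊔ F2) = H := by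
    apply le_antisymm
    · intro g hg
      rw [IntermediateField.mem_fixingSubgroup_iff] at hg
      rw [hHinf, Subgroup.mem_inf]
      constructor
      · rw [← IntermediateField.fixingSubgroup_fixedField H1]
        rw [IntermediateField.mem_fixingSubgroup_iff]
        intro t ht
        exact hg t (le_sup_left (α := IntermediateField ℚ L) (a := F1) (b := F2) ht)
      · rw [← IntermediateField.fixingSubgroup_fixedField H2]
        rw [IntermediateField.mem_fixingSubgroup_iff]
        intro t ht
        exact hg t (le_sup_right (α := IntermediateField ℚ L) (a := F1) (b := F2) ht)
    · rw [← IntermediateField.le_iff_le]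
      rw [← hK]
      exact hsupK
  have hKsup : K = F1 ⊔ F2 := by
    rw [hK, ← hfixsup, IsGalois.fixedField_fixingSubgroup]
  -- conclusion
  refine ⟨d1, d2, hsf1, hsf2, hd1, hd2, hdne, hm1, hm2, x, y, hx1, hy2, ?_⟩
  rw [show ({x, y} : Set L) = {x} ∪ {y} from rfl |>.trans (Set.insert_eq x {y}),
    IntermediateField.adjoin_union, hadj1, hadj2]
  exact hKsup
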